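/- An infinite word w over a finite alphabet is eventually periodic if and only if there exists an integer n such that the number of distinct factors of length n of w is at most n. -/

import Mathlib

def factorAt {A : Type*} (w : ℕ → A) (i n : ℕ) : List A :=
  (List.range n).map fun k => w (i + k)

def factors {A : Type*} (w : ℕ → A) (n : ℕ) : Set (List A) :=
  {u | ∃ i, u = factorAt w i n}

noncomputable def complexity {A : Type*} (w : ℕ → A) (n : ℕ) : ℕ :=
  (factors w n).ncard

def EventuallyPeriodic {A : Type*} (w : ℕ → A) : Prop :=
  ∃ N T, 1 ≤ T ∧ ∀ k, N ≤ k → w (k + T) = w k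

lemma factorAt_eq_iff {A : Type*} (w : ℕ → A) (i j n : ℕ) :
    factorAt w i n = factorAt w j n ↔ ∀ k < n, w (i + k) = w (j + k) := by
  constructor
  · intro h k hk
    have := congrArg (fun (l : List A) => l[k]?) h
    simpa [factorAt, List.getElem?_map, List.getElem?_range, hk] using this
  · intro h
    apply List.ext_getElem (by simp [factorAt])
    intro k h1 h2
    simp only [factorAt, List.length_map, List.length_range] at h1
    simp [factorAt, h k h1]

lemma factorAt_ofFn {A : Type*} (w : ℕ → A) (i n : ℕ) :
    factorAt w i n = List.ofFn (fun k : Fin n => w (i + k)) := by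
  apply List.ext_getElem (by simp [factorAt])
  intro k h1 h2
  simp [factorAt]

lemma factors_finite {A : Type*} [Fintype A] (w : ℕ → A) (n : ℕ) :
    (factors w n).Finite := by
  apply Set.Finite.subset (Set.finite_range (fun f : Fin n → A => List.ofFn f))
  rintro u ⟨i, rfl⟩
  exact ⟨fun k => w (i + k), (factorAt_ofFn w i n).symm⟩

lemma take_factorAt {A : Type*} (w : ℕ → A) (i m : ℕ) :
    (factorAt w i (m + 1)).take m = factorAt w i m := by
  simp [factorAt, ← List.map_take, List.take_range, Nat.min_eq_left (Nat.le_succ m)]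

lemma complexity_mono_succ {A : Type*} [Fintype A] (w : ℕ → A) (m : ℕ) :
    complexity w m ≤ complexity w (m + 1) := by
  have himg : (fun u : List A => u.take m) '' factors w (m + 1) = factors w m := by
    ext u
    constructor
    · rintro ⟨v, ⟨i, rfl⟩, rfl⟩
      exact ⟨i, (take_factorAt w i m)⟩
    · rintro ⟨i, rfl⟩
      exact ⟨factorAt w i (m + 1), ⟨i, rfl⟩, take_factorAt w i m⟩
  calc complexity w m = ((fun u : List A => u.take m) '' factors w (m + 1)).ncard := by
        rw [himg]; rfl
    _ ≤ complexity w (m + 1) := Set.ncard_image_le (factors_finite w (m + 1))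

/-- If complexity stalls at `m`, then length-`m` windows determine length-`(m+1)` windows. -/
lemma determinism {A : Type*} [Fintype A] (w : ℕ → A) (m : ℕ)
    (h : complexity w (m + 1) ≤ complexity w m) :
    ∀ i j, factorAt w i m = factorAt w j m →
      factorAt w i (m + 1) = factorAt w j (m + 1) := by
  have himg : (fun u : List A => u.take m) '' factors w (m + 1) = factors w m := by
    ext u
    constructor
    · rintro ⟨v, ⟨i, rfl⟩, rfl⟩
      exact ⟨i, (take_factorAt w i m)⟩
    · rintro ⟨i, rfl⟩
      exact ⟨factorAt w i (m + 1), ⟨i, rfl⟩, take_factorAt w i m⟩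
  have hcard : ((fun u : List A => u.take m) '' factors w (m + 1)).ncard
      = (factors w (m + 1)).ncard := by
    rw [himg]
    exact le_antisymm (complexity_mono_succ w m) h
  have hinj : Set.InjOn (fun u : List A => u.take m) (factors w (m + 1)) :=
    Set.injOn_of_ncard_image_eq hcard (factors_finite w (m + 1))
  intro i j hij
  apply hinj ⟨i, rfl⟩ ⟨j, rfl⟩
  simpa [take_factorAt] using hij

theorem stmt0 {A : Type*} [Fintype A] (w : ℕ → A) :
    EventuallyPeriodic w ↔ ∃ n, complexity w n ≤ n := by
  constructor
  · rintro ⟨N, T, hT, hper⟩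
    refine ⟨N + T, ?_⟩
    -- every factor of any length occurs starting before N + T
    have key : ∀ n i, ∃ j < N + T, factorAt w j n = factorAt w i n := by
      intro n i
      induction i using Nat.strong_induction_on with
      | _ i ih =>
        by_cases hi : i < N + T
        · exact ⟨i, hi, rfl⟩
        · push_neg at hi
          obtain ⟨j, hj, hjeq⟩ := ih (i - T) (by omega)
          refine ⟨j, hj, hjeq.trans ?_⟩
          rw [factorAt_eq_iff]
          intro k _
          have : w (i - T + k + T) = w (i - T + k) := hper _ (by omega)
          rw [show i + k = i - T + k + T by omega, this]
    have hsub : factors w (N + T) ⊆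
        (fun j => factorAt w j (N + T)) '' ↑(Finset.range (N + T)) := by
      rintro u ⟨i, rfl⟩
      obtain ⟨j, hj, hjeq⟩ := key (N + T) i
      exact ⟨j, by simpa using hj, hjeq⟩
    calc complexity w (N + T)
        ≤ ((fun j => factorAt w j (N + T)) '' ↑(Finset.range (N + T))).ncard :=
          Set.ncard_le_ncard hsub (Set.Finite.image _ (Finset.finite_toSet _))
      _ ≤ (↑(Finset.range (N + T)) : Set ℕ).ncard :=
          Set.ncard_image_le (Finset.finite_toSet _)
      _ = N + T := by rw [Set.ncard_coe_finset, Finset.card_range]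
  · rintro ⟨n, hn⟩
    -- find m with complexity stall
    have hstall : ∃ m, complexity w (m + 1) ≤ complexity w m := by
      by_contra hc
      push_neg at hc
      have hgrow : ∀ k, k + 1 ≤ complexity w k := by
        intro k
        induction k with
        | zero =>
          have : factors w 0 = {([] : List A)} := by
            ext u; constructor
            · rintro ⟨i, rfl⟩; simp [factorAt]
            · rintro rfl; exact ⟨0, by simp [factorAt]⟩
          simp [complexity, this]
        | succ k ih => have := hc k; omega
      have := hgrow n; omega
    obtain ⟨m, hm⟩ := hstall
    have hdet := determinism w m hm
    -- pigeonhole: two equal windows of length m+1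
    obtain ⟨i, j, hij, heq⟩ :=
      Finite.exists_ne_map_eq_of_infinite (fun i => fun k : Fin (m + 1) => w (i + k))
    have heq' : ∀ i j : ℕ, (fun k : Fin (m+1) => w (i + k)) = (fun k : Fin (m+1) => w (j + k)) →
        factorAt w i (m + 1) = factorAt w j (m + 1) := by
      intro i j h
      rw [factorAt_eq_iff]
      intro k hk
      exact congrFun h ⟨k, hk⟩
    wlog hlt : i < j generalizing i j
    · exact this j i hij.symm heq.symm (by omega)
    have hwin : ∀ d, factorAt w (i + d) (m + 1) = factorAt w (j + d) (m + 1) := by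
      intro d
      induction d with
      | zero => simpa using heq' i j heq
      | succ d ihd =>
        apply hdet
        rw [factorAt_eq_iff]
        intro k hk
        have := (factorAt_eq_iff w (i + d) (j + d) (m + 1)).1 ihd (k + 1) (by omega)
        rw [show i + (d + 1) + k = i + d + (k + 1) by omega,
            show j + (d + 1) + k = j + d + (k + 1) by omega]
        exact this
    refine ⟨i, j - i, by omega, ?_⟩
    intro k hk
    have h0 := (factorAt_eq_iff w (i + (k - i)) (j + (k - i)) (m + 1)).1 (hwin (k - i)) 0
      (by omega)
    rw [show i + (k - i) + 0 = k by omega] at h0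
    rw [show k + (j - i) = j + (k - i) + 0 by omega]
    exact h0.symm
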